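/- arXiv:0709.4465 — 3 statements merged into one kernel-verified Lean document; each statement's English description precedes it below -/
import Mathlib

section
/- Let α be a finite type and σ, τ permutations of α that are both cycles, with support(σ) ∪ support(τ) = α (every element is moved by σ or τ). If the product σ * τ is a cycle whose support is all of α (a full cycle of length |α|), then the cardinality of support(σ) ∩ support(τ) is odd. -/
theorem odd_intersection_of_full_cycle {α : Type*} [Fintype α] [DecidableEq α]
    (σ τ : Equiv.Perm α) (hσ : σ.IsCycle) (hτ : τ.IsCycle)
    (hcover : σ.support ∪ τ.support = Finset.univ)
    (hcyc : (σ * τ).IsCycle) (hfull : (σ * τ).support = Finset.univ) :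
    Odd (σ.support ∩ τ.support).card := by
  have h1 := hσ.sign
  have h2 := hτ.sign
  have h3 := hcyc.sign
  have hmul : Equiv.Perm.sign (σ * τ) = Equiv.Perm.sign σ * Equiv.Perm.sign τ :=
    map_mul _ _ _
  have hcard : (Finset.univ : Finset α).card + (σ.support ∩ τ.support).card
      = σ.support.card + τ.support.card := by
    rw [← hcover]; exact Finset.card_union_add_card_inter _ _
  have hn : (σ * τ).support.card = (Finset.univ : Finset α).card := by rw [hfull]
  rw [h1, h2, h3, hn] at hmul
  set n := (Finset.univ : Finset α).card with hndef
  set k := (σ.support ∩ τ.support).card with hkdef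
  have : (-1 : ℤˣ) ^ k = -1 := by
    have hpow : ((-1 : ℤˣ)) ^ (n + k) = (-1) ^ (σ.support.card + τ.support.card) := by
      rw [hcard]
    rw [pow_add, pow_add] at hpow
    have : -(-1 : ℤˣ) ^ n = (-(-1) ^ σ.support.card) * (-(-1) ^ τ.support.card) := hmul
    rw [neg_mul_neg] at this
    rw [← hpow] at this
    -- this : -(-1)^n = (-1)^n * (-1)^k
    have h4 : (-1 : ℤˣ) ^ n * (-1) = (-1 :ℤˣ) ^ n * ((-1) ^ k) := by
      rw [mul_neg_one]; exact this
    exact (mul_left_cancel h4).symm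
  rcases Nat.even_or_odd k with he | ho
  · simp [he.neg_one_pow] at this
  · exact ho
end

section
/- Let α be a finite type and σ, τ permutations of α that are both cycles whose supports intersect in exactly one point: support(σ) ∩ support(τ) = {t}. Then σ * τ is a cycle with support equal to support(σ) ∪ support(τ). -/
open Equiv Equiv.Perm Finset

private lemma aux_not_fix {α : Type*} [Fintype α] [DecidableEq α]
    (σ τ : Equiv.Perm α) (t : α)
    (hinter : σ.support ∩ τ.support = {t}) :
    ∀ x ∈ σ.support ∪ τ.support, (σ * τ) x ≠ x := by
  have ht : t ∈ σ.support ∩ τ.support := hinter ▸ Finset.mem_singleton_self t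
  have htσ := (Finset.mem_inter.1 ht).1
  have htτ := (Finset.mem_inter.1 ht).2
  intro x hx
  by_cases hxτ : x ∈ τ.support
  · have hτx : τ x ∈ τ.support := apply_mem_support.2 hxτ
    intro h
    simp only [Equiv.Perm.mul_apply] at h
    by_cases hτxσ : τ x ∈ σ.support
    · have h1 : τ x = t := by
        have := Finset.mem_inter.2 ⟨hτxσ, hτx⟩
        rwa [hinter, Finset.mem_singleton] at this
      rw [h1] at h
      have hxσ : x ∈ σ.support := h ▸ apply_mem_support.2 htσ
      have hxt : x = t := by
        have := Finset.mem_inter.2 ⟨hxσ, hxτ⟩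
        rwa [hinter, Finset.mem_singleton] at this
      rw [hxt] at h
      exact (mem_support.1 htσ) h
    · rw [notMem_support.1 hτxσ] at h
      exact (mem_support.1 hxτ) h
  · have hxσ : x ∈ σ.support := by
      rcases Finset.mem_union.1 hx with h | h
      · exact h
      · exact absurd h hxτ
    simp only [Equiv.Perm.mul_apply, notMem_support.1 hxτ]
    exact mem_support.1 hxσ

private lemma aux_same {α : Type*} [Fintype α] [DecidableEq α]
    (σ τ : Equiv.Perm α) (t : α)
    (hinter : σ.support ∩ τ.support = {t}) (hτ : τ.IsCycle) :
    ∀ y ∈ τ.support, (σ * τ).SameCycle t y := by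
  have ht : t ∈ σ.support ∩ τ.support := hinter ▸ Finset.mem_singleton_self t
  have htσ := (Finset.mem_inter.1 ht).1
  have htτ := (Finset.mem_inter.1 ht).2
  intro y hy
  by_cases hyt : y = t
  · exact hyt ▸ Equiv.Perm.SameCycle.refl _ _
  obtain ⟨k, hk⟩ := hτ.exists_pow_eq (mem_support.1 htτ) (mem_support.1 hy)
  have hkex : ∃ k, 0 < k ∧ (τ ^ k) t = y := by
    refine ⟨k, ?_, hk⟩
    rcases Nat.eq_zero_or_pos k with h | h
    · exfalso
      rw [h] at hk
      simp at hk
      exact hyt hk.symm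
    · exact h
  classical
  obtain ⟨hm0, hmy⟩ : 0 < Nat.find hkex ∧ (τ ^ Nat.find hkex) t = y := Nat.find_spec hkex
  set m := Nat.find hkex with hmdef
  have hmin : ∀ j, 0 < j → j < m → (τ ^ j) t ≠ t := by
    intro j hj0 hjm hjt
    have h2 : (τ ^ (m - j)) t = y := by
      have h3 : (τ ^ (m - j)) ((τ ^ j) t) = (τ ^ m) t := by
        rw [← Equiv.Perm.mul_apply, ← pow_add, Nat.sub_add_cancel hjm.le]
      rw [hjt] at h3
      rw [h3, hmy]
    exact Nat.find_min hkex (by omega) ⟨by omega, h2⟩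
  have hpow : ∀ n ≤ m, ((σ * τ) ^ n) t = (τ ^ n) t := by
    intro n hn
    induction n with
    | zero => simp
    | succ n ih =>
      have hstep : (τ ^ (n + 1)) t ∈ τ.support :=
        (τ.pow_apply_mem_support).2 htτ
      have hne : (τ ^ (n + 1)) t ≠ t := by
        rcases eq_or_lt_of_le hn with h | h
        · rw [h, hmy]; exact hyt
        · exact hmin (n + 1) (Nat.succ_pos n) h
      have hnotσ : (τ ^ (n + 1)) t ∉ σ.support := by
        intro hmem
        have := Finset.mem_inter.2 ⟨hmem, hstep⟩
        rw [hinter, Finset.mem_singleton] at this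
        exact hne this
      calc ((σ * τ) ^ (n + 1)) t = (σ * τ) (((σ * τ) ^ n) t) := by
            rw [pow_succ', Equiv.Perm.mul_apply]
        _ = σ (τ ((τ ^ n) t)) := by rw [ih (le_of_lt (Nat.lt_of_succ_le hn))]; rfl
        _ = σ ((τ ^ (n + 1)) t) := by rw [pow_succ', Equiv.Perm.mul_apply]
        _ = (τ ^ (n + 1)) t := notMem_support.1 hnotσ
  exact ⟨(m : ℤ), by rw [zpow_natCast, hpow m le_rfl, hmy]⟩

theorem prod_isCycle_of_inter_singleton {α : Type*} [Fintype α] [DecidableEq α]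
    (σ τ : Equiv.Perm α) (hσ : σ.IsCycle) (hτ : τ.IsCycle) (t : α)
    (hinter : σ.support ∩ τ.support = {t}) :
    (σ * τ).IsCycle ∧ (σ * τ).support = σ.support ∪ τ.support := by
  have ht : t ∈ σ.support ∩ τ.support := hinter ▸ Finset.mem_singleton_self t
  have htσ := (Finset.mem_inter.1 ht).1
  have htτ := (Finset.mem_inter.1 ht).2
  have hnf := aux_not_fix σ τ t hinter
  have hsameτ := aux_same σ τ t hinter hτ
  have hinter' : τ⁻¹.support ∩ σ⁻¹.support = {t} := by
    rw [Equiv.Perm.support_inv, Equiv.Perm.support_inv, Finset.inter_comm, hinter]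
  have hsameσ : ∀ y ∈ σ.support, (σ * τ).SameCycle t y := by
    intro y hy
    have h1 : (τ⁻¹ * σ⁻¹).SameCycle t y :=
      aux_same τ⁻¹ σ⁻¹ t hinter' hσ.inv y (by rwa [Equiv.Perm.support_inv])
    have h2 : (σ * τ)⁻¹.SameCycle t y := by rwa [mul_inv_rev]
    exact (Equiv.Perm.sameCycle_inv).1 h2
  have hsupp : (σ * τ).support = σ.support ∪ τ.support := by
    apply Finset.Subset.antisymm
    · exact Equiv.Perm.support_mul_le σ τ
    · intro x hx
      exact mem_support.2 (hnf x hx)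
  refine ⟨⟨t, ?_, ?_⟩, hsupp⟩
  · exact hnf t (Finset.mem_union_left _ htσ)
  · intro y hyne
    have hy : y ∈ σ.support ∪ τ.support := hsupp ▸ mem_support.2 hyne
    rcases Finset.mem_union.1 hy with h | h
    · exact hsameσ y h
    · exact hsameτ y h
end

section
/- Let R be a commutative ring containing a unit a, and let A be an associative unital R-algebra with an element e satisfying e² = d·e where d = -a² - a⁻². Then for every k ≥ 1, (a⁻¹·e + a·1)^k = p_k(a)·e + a^k·1, where p_k(a) = Σ_{l=0}^{k-1} (-1)^l a^(k-2-4l). -/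
theorem TL_generator_power {R : Type*} [CommRing R] (a : Rˣ)
    {A : Type*} [Ring A] [Algebra R A] (e : A)
    (he : e * e = (-(a : R) ^ 2 - ((a⁻¹ : Rˣ) : R) ^ 2) • e)
    (k : ℕ) (hk : 1 ≤ k) :
    (((a⁻¹ : Rˣ) : R) • e + (a : R) • (1 : A)) ^ k
      = (∑ l ∈ Finset.range k,
            (-1 : R) ^ l * ((a ^ ((k : ℤ) - 2 - 4 * (l : ℤ)) : Rˣ) : R)) • e
        + ((a : R) ^ k) • (1 : A) := by
  have hinv : (a : R) * ((a⁻¹ : Rˣ) : R) = 1 := by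
    rw [← Units.val_mul, mul_inv_cancel, Units.val_one]
  induction k, hk using Nat.le_induction with
  | base =>
      have h1 : ((1:ℕ):ℤ) - 2 - 4 * ((0:ℕ):ℤ) = -1 := by norm_num
      simp [Finset.sum_range_one, h1]
  | succ k hk ih =>
      rw [pow_succ, ih]
      set c : R := ∑ l ∈ Finset.range k,
            (-1 : R) ^ l * ((a ^ ((k : ℤ) - 2 - 4 * (l : ℤ)) : Rˣ) : R) with hc
      have hcoef : (((a⁻¹ : Rˣ) : R) * (-(a : R) ^ 2 - ((a⁻¹ : Rˣ) : R) ^ 2) + (a:R))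
          = -(((a⁻¹ : Rˣ) : R))^3 := by
        linear_combination (-(a:R)) * hinv
      have hsum : (∑ l ∈ Finset.range (k+1),
            (-1 : R) ^ l * ((a ^ (((k+1:ℕ) : ℤ) - 2 - 4 * (l : ℤ)) : Rˣ) : R))
          = (((a⁻¹ : Rˣ) : R) * (-(a : R) ^ 2 - ((a⁻¹ : Rˣ) : R) ^ 2) + (a:R)) * c
            + (a:R)^k * ((a⁻¹ : Rˣ):R) := by
        rw [Finset.sum_range_succ', hcoef, hc, Finset.mul_sum]
        congr 1
        · apply Finset.sum_congr rfl
          intro l hl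
          have hexp : (((k+1:ℕ) : ℤ) - 2 - 4 * ((l+1:ℕ) : ℤ)) = ((k:ℤ) - 2 - 4*(l:ℤ)) + (-3) := by
            push_cast; ring
          have hz : (a ^ (((k+1:ℕ) : ℤ) - 2 - 4 * ((l+1:ℕ) : ℤ)) : Rˣ)
              = a ^ ((k:ℤ) - 2 - 4*(l:ℤ)) * (a⁻¹)^3 := by
            rw [hexp, zpow_add]
            congr 1
          rw [hz]
          push_cast
          ring
        · have hexp : (((k+1:ℕ) : ℤ) - 2 - 4 * ((0:ℕ) : ℤ)) = (k:ℤ) - 1 := by push_cast; ring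
          have hz : (a ^ (((k+1:ℕ) : ℤ) - 2 - 4 * ((0:ℕ) : ℤ)) : Rˣ) = a ^ k * a⁻¹ := by
            rw [hexp, zpow_sub, zpow_natCast, zpow_one]
          rw [hz]
          push_cast
          ring
      rw [hsum]
      simp only [add_mul, mul_add, smul_mul_smul_comm, one_mul, mul_one, he, smul_smul]
      rw [pow_succ]
      module
end
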